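/- Let F be a graph with v(F) > 2 and e(F) ≥ 2 such that F is strictly balanced with m_2(F) > 1, and let C_0, C_1 > 0 with C_0 n^{-1/m_2(F)} ≤ p ≤ C_1 n^{-1/m_2(F)}. Then for any proper subgraph F_0 ⊊ F with e(F_0) ≥ 1 and any such p, the quantity n^{2v(F)-v(F_0)-3} p^{2e(F)-e(F_0)-2} is at most C' · n^{-(1 - 1/m_2(F))} for some constant C' depending only on F, C_0, C_1; in particular it tends to 0 as n → ∞. -/
import Mathlib


open SimpleGraph

/-- The 2-density of a subgraph: `(e(H) - 1)/(v(H) - 2)` when `v(H) > 2`, and `1` otherwise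
(in particular `d₂(K₂) = 1`). -/
noncomputable def d2 {V : Type*} {G : SimpleGraph V} (H : G.Subgraph) : ℝ :=
  if 2 < H.verts.ncard then ((H.edgeSet.ncard : ℝ) - 1) / ((H.verts.ncard : ℝ) - 2) else 1

/-- The maximum 2-density `m₂(G)`, the supremum of `d₂` over subgraphs with at least one edge. -/
noncomputable def m2 {V : Type*} (G : SimpleGraph V) : ℝ :=
  sSup {x : ℝ | ∃ H : G.Subgraph, H.edgeSet.Nonempty ∧ d2 H = x}

/-- `G` is strictly balanced: `d₂(G) = m₂(G)` and all proper subgraphs with at least one edge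
have strictly smaller 2-density. -/
def StrictlyBalanced {V : Type*} (G : SimpleGraph V) : Prop :=
  d2 (⊤ : G.Subgraph) = m2 G ∧
    ∀ H : G.Subgraph, H ≠ ⊤ → H.edgeSet.Nonempty → d2 H < m2 G

/-- Key estimate for bad embeddings of type (B2): for strictly balanced `F` with `m₂(F) > 1`,
`v(F) > 2`, `e(F) ≥ 2` and `C₀ n^{-1/m₂(F)} ≤ p ≤ C₁ n^{-1/m₂(F)}`, for every proper subgraph
`F₀ ⊊ F` with at least one edge the quantity `n^{2v(F)-v(F₀)-3} p^{2e(F)-e(F₀)-2}` is at most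
`C' · n^{-(1-1/m₂(F))}` for a constant `C'` depending only on `F`, `C₀`, `C₁`. -/

lemma aux_two_verts {V : Type*} {G : SimpleGraph V} (H : G.Subgraph)
    (h2 : H.verts.ncard = 2) : H.edgeSet.ncard ≤ 1 := by
  obtain ⟨x, y, hxy, hv⟩ := Set.ncard_eq_two.mp h2
  have hsub : H.edgeSet ⊆ {s(x, y)} := by
    intro s hs
    induction s with
    | _ a b =>
      rw [Subgraph.mem_edgeSet] at hs
      have ha : a ∈ H.verts := hs.fst_mem
      have hb : b ∈ H.verts := hs.snd_mem
      have hab : a ≠ b := hs.ne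
      rw [hv] at ha hb
      simp only [Set.mem_insert_iff, Set.mem_singleton_iff] at ha hb ⊢
      rcases ha with rfl | rfl <;> rcases hb with rfl | rfl <;>
        simp_all [Sym2.eq_swap]
  calc H.edgeSet.ncard ≤ ({s(x,y)} : Set (Sym2 V)).ncard :=
        Set.ncard_le_ncard hsub (Set.finite_singleton _)
    _ = 1 := Set.ncard_singleton _

lemma aux_ge_two {V : Type*} {G : SimpleGraph V} (H : G.Subgraph)
    (hne : H.edgeSet.Nonempty) (hfin : H.verts.Finite) : 2 ≤ H.verts.ncard := by
  obtain ⟨s, hs⟩ := hne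
  induction s with
  | _ a b =>
    rw [Subgraph.mem_edgeSet] at hs
    have hsub : ({a, b} : Set V) ⊆ H.verts := by
      intro z hz
      rcases hz with rfl | hz
      · exact hs.fst_mem
      · rw [Set.mem_singleton_iff] at hz; subst hz; exact hs.snd_mem
    calc 2 = ({a, b} : Set V).ncard := (Set.ncard_pair hs.ne).symm
      _ ≤ H.verts.ncard := Set.ncard_le_ncard hsub hfin

theorem stmt_16 {V : Type*} [Fintype V] (F : SimpleGraph V)
    (hv : 2 < Fintype.card V) (he : 2 ≤ F.edgeSet.ncard)
    (hsb : StrictlyBalanced F) (hm : 1 < m2 F)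
    (C0 C1 : ℝ) (h0 : 0 < C0) (h01 : C0 ≤ C1) :
    ∃ C' : ℝ, 0 < C' ∧ ∀ F0 : F.Subgraph, F0 ≠ ⊤ → F0.edgeSet.Nonempty →
      ∀ n : ℕ, 1 ≤ n → ∀ p : ℝ,
        C0 * (n : ℝ) ^ (-(1 / m2 F)) ≤ p → p ≤ C1 * (n : ℝ) ^ (-(1 / m2 F)) →
        (n : ℝ) ^ (2 * Fintype.card V - F0.verts.ncard - 3) *
            p ^ (2 * F.edgeSet.ncard - F0.edgeSet.ncard - 2)
          ≤ C' * (n : ℝ) ^ (-(1 - 1 / m2 F)) := by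
  classical
  set m := m2 F with hm_def
  set v := Fintype.card V with hv_def
  set e := F.edgeSet.ncard with he_def
  have hC1 : 0 < C1 := lt_of_lt_of_le h0 h01
  have hm0 : 0 < m := lt_trans one_pos hm
  -- m = (e-1)/(v-2)
  have hd2top : d2 (⊤ : F.Subgraph) = ((e : ℝ) - 1) / ((v : ℝ) - 2) := by
    rw [d2, Subgraph.verts_top, Subgraph.edgeSet_top, Set.ncard_univ, Nat.card_eq_fintype_card, if_pos hv]
  have hmv : m * ((v : ℝ) - 2) = (e : ℝ) - 1 := by
    have hv2 : (0 : ℝ) < (v : ℝ) - 2 := by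
      have : (2 : ℝ) < (v : ℝ) := by exact_mod_cast hv
      linarith
    rw [hm_def, ← hsb.1, hd2top]
    field_simp
  refine ⟨max 1 C1 ^ (2 * e), pow_pos (lt_of_lt_of_le one_pos (le_max_left _ _)) _, ?_⟩
  intro F0 hne hF0e n hn p hpl hpu
  set v0 := F0.verts.ncard with hv0_def
  set e0 := F0.edgeSet.ncard with he0_def
  have hn1 : (1 : ℝ) ≤ (n : ℝ) := by exact_mod_cast hn
  have hnpos : (0 : ℝ) < (n : ℝ) := lt_of_lt_of_le one_pos hn1
  have hp0 : 0 ≤ p :=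
    le_trans (le_of_lt (mul_pos h0 (Real.rpow_pos_of_pos hnpos _))) hpl
  -- cardinality facts
  have hv0le : v0 ≤ v := by
    have := Set.ncard_le_ncard (Set.subset_univ F0.verts) Set.finite_univ
    simpa [Set.ncard_univ, Nat.card_eq_fintype_card] using this
  have he0le : e0 ≤ e := by
    exact Set.ncard_le_ncard (Subgraph.edgeSet_subset F0) (Set.toFinite _)
  have hv02 : 2 ≤ v0 := aux_ge_two F0 hF0e (Set.toFinite _)
  have he01 : 1 ≤ e0 := (Set.ncard_pos (Set.toFinite _)).mpr hF0e
  -- natural subtraction is honest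
  set A := 2 * v - v0 - 3 with hA_def
  set B := 2 * e - e0 - 2 with hB_def
  have hAcast : (A : ℝ) = 2 * (v : ℝ) - (v0 : ℝ) - 3 := by
    have : v0 + 3 ≤ 2 * v := by omega
    rw [hA_def]; push_cast [Nat.sub_sub, Nat.cast_sub this]; ring
  have hBcast : (B : ℝ) = 2 * (e : ℝ) - (e0 : ℝ) - 2 := by
    have : e0 + 2 ≤ 2 * e := by omega
    rw [hB_def]; push_cast [Nat.sub_sub, Nat.cast_sub this]; ring
  -- key: e0 - 1 ≤ m (v0 - 2)
  have hkey : (e0 : ℝ) - 1 ≤ m * ((v0 : ℝ) - 2) := by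
    rcases lt_or_eq_of_le hv02 with hlt | heq
    · have hv02R : (0 : ℝ) < (v0 : ℝ) - 2 := by
        have : (2 : ℝ) < (v0 : ℝ) := by exact_mod_cast hlt
        linarith
      have hd2 : d2 F0 = ((e0 : ℝ) - 1) / ((v0 : ℝ) - 2) := by
        rw [d2, if_pos hlt]
      have := hsb.2 F0 hne hF0e
      rw [hd2] at this
      have := (div_lt_iff₀ hv02R).mp this
      linarith
    · have he0' : e0 ≤ 1 := aux_two_verts F0 heq.symm
      have : e0 = 1 := le_antisymm he0' he01
      rw [this, ← heq]
      norm_num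
  -- exponent inequality
  have hexp : (A : ℝ) + (-(1 / m)) * (B : ℝ) ≤ -(1 - 1 / m) := by
    have hmA : m * ((A : ℝ) + 1) ≤ (B : ℝ) + 1 := by
      rw [hAcast, hBcast]
      nlinarith [hmv, hkey]
    have h1 : (A : ℝ) + (-(1 / m)) * (B : ℝ) - (-(1 - 1 / m))
        = (m * ((A : ℝ) + 1) - ((B : ℝ) + 1)) / m := by
      field_simp
      ring
    have h2 : (m * ((A : ℝ) + 1) - ((B : ℝ) + 1)) / m ≤ 0 :=
      div_nonpos_of_nonpos_of_nonneg (by linarith) hm0.le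
    linarith [h1 ▸ h2]
  -- main chain
  have hstep1 : p ^ B ≤ (C1 * (n : ℝ) ^ (-(1 / m))) ^ B := pow_le_pow_left₀ hp0 hpu B
  have hrw : (n : ℝ) ^ A * ((n : ℝ) ^ (-(1 / m))) ^ B
      = (n : ℝ) ^ ((A : ℝ) + (-(1 / m)) * (B : ℝ)) := by
    rw [← Real.rpow_natCast ((n : ℝ) ^ (-(1 / m))) B, ← Real.rpow_natCast (n : ℝ) A,
      ← Real.rpow_mul hnpos.le, ← Real.rpow_add hnpos]
  have hC1B : C1 ^ B ≤ max 1 C1 ^ (2 * e) := by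
    calc C1 ^ B ≤ max 1 C1 ^ B :=
          pow_le_pow_left₀ hC1.le (le_max_right _ _) B
      _ ≤ max 1 C1 ^ (2 * e) :=
          pow_le_pow_right₀ (le_max_left _ _) (by omega)
  calc (n : ℝ) ^ A * p ^ B
      ≤ (n : ℝ) ^ A * (C1 * (n : ℝ) ^ (-(1 / m))) ^ B := by
        exact mul_le_mul_of_nonneg_left hstep1 (by positivity)
    _ = C1 ^ B * ((n : ℝ) ^ A * ((n : ℝ) ^ (-(1 / m))) ^ B) := by
        rw [mul_pow]; ring
    _ = C1 ^ B * (n : ℝ) ^ ((A : ℝ) + (-(1 / m)) * (B : ℝ)) := by rw [hrw]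
    _ ≤ max 1 C1 ^ (2 * e) * (n : ℝ) ^ (-(1 - 1 / m)) := by
        apply mul_le_mul hC1B (Real.rpow_le_rpow_of_exponent_le hn1 hexp)
          (Real.rpow_nonneg hnpos.le _) (by positivity)
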